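/- The operators S^z = (1/2)∑ₙ σₙ^z and S^± = ∑ₙ q^{(σ₁^z+⋯+σ_{n-1}^z)/2} (σₙ^±/2) q^{-(σ_{n+1}^z+⋯+σ_N^z)/2} on (ℂ²)^{⊗N} satisfy the quantum group relations [S^z, S^±] = ±S^± and [S^+, S^-] = (q^{2S^z} - q^{-2S^z})/(q - q⁻¹). -/

import Mathlib

open Matrix Finset

/-- Eigenvalue of `σ^z` on the basis vector labelled by a spin: `0 ↦ +1`, `1 ↦ -1`. -/
def spinZ : Fin 2 → ℤ := fun i => if i = 0 then 1 else -1

/-- The operator `S^z = (1/2) ∑ₙ σₙ^z` on `(ℂ²)^{⊗N}` (diagonal in the spin basis). -/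
noncomputable def Sz (N : ℕ) : Matrix (Fin N → Fin 2) (Fin N → Fin 2) ℂ :=
  Matrix.diagonal (fun s => ((∑ n, spinZ (s n) : ℤ) : ℂ) / 2)

/-- `S^+ = ∑ₙ q^{(σ₁^z+⋯+σ_{n-1}^z)/2} (σₙ⁺/2) q^{-(σ_{n+1}^z+⋯+σ_N^z)/2}`,
where `r` is a fixed square root of `q` (so that `q^{A/2} = r^{A}` on integer
eigenvalues of `A`). -/
noncomputable def Sp (N : ℕ) (r : ℂ) : Matrix (Fin N → Fin 2) (Fin N → Fin 2) ℂ :=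
  ∑ n : Fin N, (fun s s' =>
    if s' n = 1 ∧ s = Function.update s' n 0 then
      r ^ (∑ m ∈ univ.filter (fun m => m < n), spinZ (s' m)) *
        r ^ (-(∑ m ∈ univ.filter (fun m => n < m), spinZ (s' m)))
    else 0)

/-- `S^- = ∑ₙ q^{(σ₁^z+⋯+σ_{n-1}^z)/2} (σₙ⁻/2) q^{-(σ_{n+1}^z+⋯+σ_N^z)/2}`. -/
noncomputable def Sm (N : ℕ) (r : ℂ) : Matrix (Fin N → Fin 2) (Fin N → Fin 2) ℂ :=
  ∑ n : Fin N, (fun s s' =>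
    if s' n = 0 ∧ s = Function.update s' n 1 then
      r ^ (∑ m ∈ univ.filter (fun m => m < n), spinZ (s' m)) *
        r ^ (-(∑ m ∈ univ.filter (fun m => n < m), spinZ (s' m)))
    else 0)

/-- `q^{2S^z}` and `q^{-2S^z}` by functional calculus: `2S^z` is diagonal with
integer eigenvalues `∑ₙ σₙ^z`. -/
noncomputable def qPow2Sz (N : ℕ) (q : ℂ) (ε : ℤ) :
    Matrix (Fin N → Fin 2) (Fin N → Fin 2) ℂ :=
  Matrix.diagonal (fun s => q ^ (ε * ∑ n, spinZ (s n)))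

namespace QGaux
variable {N : ℕ}

def tot (s : Fin N → Fin 2) : ℤ := ∑ n, spinZ (s n)
def Afun (n : Fin N) (s : Fin N → Fin 2) : ℤ := ∑ m ∈ univ.filter (fun m => m < n), spinZ (s m)
def Bfun (n : Fin N) (s : Fin N → Fin 2) : ℤ := ∑ m ∈ univ.filter (fun m => n < m), spinZ (s m)

lemma sum_spin_update (P : Finset (Fin N)) (s : Fin N → Fin 2) (i : Fin N) (v : Fin 2) :
    ∑ k ∈ P, spinZ (Function.update s i v k) =
      (∑ k ∈ P, spinZ (s k)) + (if i ∈ P then spinZ v - spinZ (s i) else 0) := by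
  classical
  split_ifs with h
  · rw [← Finset.sum_erase_add _ _ h, ← Finset.sum_erase_add _ (fun k => spinZ (s k)) h,
      Function.update_self]
    rw [Finset.sum_congr rfl (fun k hk => by
      rw [Function.update_of_ne (Finset.ne_of_mem_erase hk)])]
    ring
  · rw [add_zero]
    exact Finset.sum_congr rfl fun k hk => by
      rw [Function.update_of_ne (fun hne => h (by rwa [hne] at hk))]

lemma tot_update (s : Fin N → Fin 2) (i : Fin N) (v : Fin 2) :
    tot (Function.update s i v) = tot s - spinZ (s i) + spinZ v := by
  rw [tot, tot, sum_spin_update]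
  simp only [Finset.mem_univ, if_true]
  ring

lemma three_split (n : Fin N) (s : Fin N → Fin 2) :
    tot s = Afun n s + spinZ (s n) + Bfun n s := by
  classical
  have h1 := Finset.sum_filter_add_sum_filter_not univ (fun m => m < n) (fun m => spinZ (s m))
  have h2 : univ.filter (fun m => ¬ m < n) = insert n (univ.filter (fun m => n < m)) := by
    ext m
    simp only [Finset.mem_filter, Finset.mem_univ, true_and, Finset.mem_insert, Fin.lt_def,
      Fin.ext_iff]
    omega
  rw [h2, Finset.sum_insert (by simp)] at h1
  unfold tot Afun Bfun
  rw [← h1]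
  ring

noncomputable def w (r : ℂ) (n : Fin N) (s : Fin N → Fin 2) : ℂ :=
  r ^ (Afun n s) * r ^ (-(Bfun n s))

lemma Sp_apply (r : ℂ) (s s' : Fin N → Fin 2) :
    Sp N r s s' = ∑ n, if s' n = 1 ∧ s = Function.update s' n 0 then w r n s' else 0 := by
  simp [Sp, w, Afun, Bfun, Finset.sum_apply, Matrix.sum_apply]
  exact Matrix.sum_apply _ _ _ _

lemma Sm_apply (r : ℂ) (s s' : Fin N → Fin 2) :
    Sm N r s s' = ∑ n, if s' n = 0 ∧ s = Function.update s' n 1 then w r n s' else 0 := by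
  simp [Sm, w, Afun, Bfun, Finset.sum_apply, Matrix.sum_apply]
  exact Matrix.sum_apply _ _ _ _

lemma sum_collapse (F : (Fin N → Fin 2) → ℂ) (c : Prop) [Decidable c]
    (u : Fin N → Fin 2) (W : ℂ) :
    ∑ t : Fin N → Fin 2, F t * (if c ∧ t = u then W else 0) = if c then F u * W else 0 := by
  by_cases hc : c <;> simp [hc, mul_ite, Finset.sum_ite_eq']

lemma SpSm_apply (r : ℂ) (s s'' : Fin N → Fin 2) :
    (Sp N r * Sm N r) s s'' =
      ∑ m : Fin N, ∑ n : Fin N, (if s'' m = 0 then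
        (if (Function.update s'' m 1) n = 1 ∧ s = Function.update (Function.update s'' m 1) n 0
          then w r n (Function.update s'' m 1) * w r m s'' else 0) else 0) := by
  rw [Matrix.mul_apply]
  simp only [Sp_apply, Sm_apply, Finset.sum_mul, Finset.mul_sum]
  rw [Finset.sum_comm]
  refine Finset.sum_congr rfl fun m _ => ?_
  rw [Finset.sum_comm]
  refine Finset.sum_congr rfl fun n _ => ?_
  rw [sum_collapse (fun t => if t n = 1 ∧ s = Function.update t n 0 then w r n t else 0)]
  split_ifs <;> simp

lemma SmSp_apply (r : ℂ) (s s'' : Fin N → Fin 2) :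
    (Sm N r * Sp N r) s s'' =
      ∑ n : Fin N, ∑ m : Fin N, (if s'' n = 1 then
        (if (Function.update s'' n 0) m = 0 ∧ s = Function.update (Function.update s'' n 0) m 1
          then w r m (Function.update s'' n 0) * w r n s'' else 0) else 0) := by
  rw [Matrix.mul_apply]
  simp only [Sp_apply, Sm_apply, Finset.sum_mul, Finset.mul_sum]
  rw [Finset.sum_comm]
  refine Finset.sum_congr rfl fun n _ => ?_
  rw [Finset.sum_comm]
  refine Finset.sum_congr rfl fun m _ => ?_
  rw [sum_collapse (fun t => if t m = 0 ∧ s = Function.update t m 1 then w r m t else 0)]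
  split_ifs <;> simp

lemma key_e (q : ℂ) (hq : q ≠ 0) (x : ℤ) :
    (q - q⁻¹) * q ^ (x + 1) = q ^ (x + 2) - q ^ x := by
  rw [zpow_add₀ hq x 2, zpow_add₀ hq x 1, zpow_one, zpow_two]
  field_simp

lemma telescope (q : ℂ) (hq : q ≠ 0) (s : Fin N → Fin 2) :
    (q - q⁻¹) * ∑ n, (spinZ (s n) : ℂ) * q ^ (Afun n s - Bfun n s) =
      q ^ (tot s) - q ^ (-(tot s)) := by
  classical
  set P : ℕ → ℤ := fun k => ∑ m ∈ univ.filter (fun m : Fin N => (m : ℕ) < k), spinZ (s m) with hP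
  set F : ℕ → ℂ := fun k => q ^ (2 * P k - tot s) with hF
  have hAP : ∀ n : Fin N, Afun n s = P (n : ℕ) := fun n =>
    Finset.sum_congr (by ext m; simp only [Finset.mem_filter, Fin.lt_def]) (fun _ _ => rfl)
  have hPsucc : ∀ (k : ℕ) (hk : k < N), P (k + 1) = P k + spinZ (s ⟨k, hk⟩) := by
    intro k hk
    have h : univ.filter (fun m : Fin N => (m : ℕ) < k + 1) =
        insert ⟨k, hk⟩ (univ.filter (fun m : Fin N => (m : ℕ) < k)) := by
      ext m
      simp only [Finset.mem_filter, Finset.mem_univ, true_and, Finset.mem_insert, Fin.ext_iff]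
      omega
    rw [hP]
    simp only
    rw [h, Finset.sum_insert (by simp)]
    ring
  have hstep : ∀ n : Fin N,
      (q - q⁻¹) * ((spinZ (s n) : ℂ) * q ^ (Afun n s - Bfun n s)) = F ((n : ℕ) + 1) - F (n : ℕ) := by
    intro n
    have hB : Bfun n s = tot s - P (n : ℕ) - spinZ (s n) := by
      have := three_split n s
      rw [hAP n] at this
      omega
    have hsucc := hPsucc (n : ℕ) n.isLt
    have hn : s ⟨(n : ℕ), n.isLt⟩ = s n := by congr
    rw [hAP n, hB, hF]
    simp only
    rw [hsucc, hn]
    rcases show s n = 0 ∨ s n = 1 from by omega with h | h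
    · rw [h]
      show (q - q⁻¹) * ((spinZ 0 : ℂ) * q ^ (P (n:ℕ) - (tot s - P (n:ℕ) - spinZ 0))) = _
      have h1 : P (n:ℕ) - (tot s - P (n:ℕ) - spinZ 0) = (2 * P (n:ℕ) - tot s) + 1 := by
        simp [spinZ]; ring
      have h2 : 2 * (P (n:ℕ) + spinZ 0) - tot s = (2 * P (n:ℕ) - tot s) + 2 := by
        simp [spinZ]; ring
      rw [h1, h2, show ((spinZ 0 : ℤ) : ℂ) = 1 by simp [spinZ], one_mul, key_e q hq]
    · rw [h]
      show (q - q⁻¹) * ((spinZ 1 : ℂ) * q ^ (P (n:ℕ) - (tot s - P (n:ℕ) - spinZ 1))) = _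
      have h1 : P (n:ℕ) - (tot s - P (n:ℕ) - spinZ 1) = ((2 * P (n:ℕ) - tot s - 2) + 1) := by
        simp [spinZ]; ring
      have h2 : 2 * (P (n:ℕ) + spinZ 1) - tot s = 2 * P (n:ℕ) - tot s - 2 := by
        simp [spinZ]; ring
      have h3 : (2 * P (n:ℕ) - tot s - 2) + 2 = 2 * P (n:ℕ) - tot s := by ring
      rw [h1, h2, show ((spinZ 1 : ℤ) : ℂ) = -1 by simp [spinZ]]
      have := key_e q hq (2 * P (n:ℕ) - tot s - 2)
      rw [h3] at this
      linear_combination -this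
  rw [Finset.mul_sum, Finset.sum_congr rfl (fun n _ => hstep n)]
  rw [Fin.sum_univ_eq_sum_range (fun k => F (k + 1) - F k) N, Finset.sum_range_sub F N]
  have hP0 : P 0 = 0 := by simp [hP]
  have hPN : P N = tot s := by
    rw [hP, tot]
    simp only
    refine Finset.sum_congr ?_ (fun _ _ => rfl)
    simp [Finset.filter_true_of_mem (fun (m : Fin N) _ => m.isLt)]
  rw [hF]
  simp only
  rw [hP0, hPN, show 2 * tot s - tot s = tot s by ring, show 2 * (0:ℤ) - tot s = -tot s by ring]

lemma w_eq_zpow (r : ℂ) (hr0 : r ≠ 0) (n : Fin N) (t : Fin N → Fin 2) :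
    w r n t = r ^ (Afun n t - Bfun n t) := by
  rw [w, ← zpow_add₀ hr0, ← sub_eq_add_neg]

lemma Afun_update_self (n : Fin N) (s : Fin N → Fin 2) (v : Fin 2) :
    Afun n (Function.update s n v) = Afun n s := by
  rw [Afun, Afun, sum_spin_update]
  simp

lemma Bfun_update_self (n : Fin N) (s : Fin N → Fin 2) (v : Fin 2) :
    Bfun n (Function.update s n v) = Bfun n s := by
  rw [Bfun, Bfun, sum_spin_update]
  simp

lemma w_sq (r q : ℂ) (hr0 : r ≠ 0) (hr : r ^ 2 = q) (n : Fin N) (t : Fin N → Fin 2) :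
    w r n t * w r n t = q ^ (Afun n t - Bfun n t) := by
  rw [w_eq_zpow r hr0, ← zpow_add₀ hr0, ← hr]
  rw [show (Afun n t - Bfun n t) + (Afun n t - Bfun n t) = (2 : ℤ) * (Afun n t - Bfun n t) by ring]
  rw [_root_.zpow_mul]
  norm_cast

lemma cross (r : ℂ) (hr0 : r ≠ 0) {n m : Fin N} (hnm : n ≠ m) (s : Fin N → Fin 2)
    (h1 : s n = 1) (h0 : s m = 0) :
    w r n (Function.update s m 1) * w r m s = w r m (Function.update s n 0) * w r n s := by
  have e1 : Afun n (Function.update s m 1) = Afun n s + (if m < n then -2 else 0) := by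
    rw [Afun, Afun, sum_spin_update]
    congr 1
    simp only [Finset.mem_filter, Finset.mem_univ, true_and, h0]
    norm_num [spinZ]
  have e2 : Bfun n (Function.update s m 1) = Bfun n s + (if n < m then -2 else 0) := by
    rw [Bfun, Bfun, sum_spin_update]
    congr 1
    simp only [Finset.mem_filter, Finset.mem_univ, true_and, h0]
    norm_num [spinZ]
  have e3 : Afun m (Function.update s n 0) = Afun m s + (if n < m then 2 else 0) := by
    rw [Afun, Afun, sum_spin_update]
    congr 1
    simp only [Finset.mem_filter, Finset.mem_univ, true_and, h1]
    norm_num [spinZ]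
  have e4 : Bfun m (Function.update s n 0) = Bfun m s + (if m < n then 2 else 0) := by
    rw [Bfun, Bfun, sum_spin_update]
    congr 1
    simp only [Finset.mem_filter, Finset.mem_univ, true_and, h1]
    norm_num [spinZ]
  rw [w_eq_zpow r hr0, w_eq_zpow r hr0, w_eq_zpow r hr0, w_eq_zpow r hr0,
    ← zpow_add₀ hr0, ← zpow_add₀ hr0]
  congr 1
  rw [e1, e2, e3, e4]
  split_ifs <;> ring

lemma offdiag_term (r : ℂ) (hr0 : r ≠ 0) (s s'' : Fin N → Fin 2) (hss : s ≠ s'') (m n : Fin N) :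
    (if s'' m = 0 then
        (if (Function.update s'' m 1) n = 1 ∧ s = Function.update (Function.update s'' m 1) n 0
          then w r n (Function.update s'' m 1) * w r m s'' else 0) else 0) =
    (if s'' n = 1 then
        (if (Function.update s'' n 0) m = 0 ∧ s = Function.update (Function.update s'' n 0) m 1
          then w r m (Function.update s'' n 0) * w r n s'' else 0) else 0) := by
  by_cases hnm : n = m
  · subst hnm
    have l : (if s'' n = 0 then
        (if (Function.update s'' n 1) n = 1 ∧ s = Function.update (Function.update s'' n 1) n 0
          then w r n (Function.update s'' n 1) * w r n s'' else 0) else 0) = 0 := by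
      by_cases h0 : s'' n = 0
      · rw [if_pos h0, if_neg]
        rintro ⟨-, hs⟩
        rw [Function.update_idem, ← h0, Function.update_eq_self] at hs
        exact hss hs
      · rw [if_neg h0]
    have rr : (if s'' n = 1 then
        (if (Function.update s'' n 0) n = 0 ∧ s = Function.update (Function.update s'' n 0) n 1
          then w r n (Function.update s'' n 0) * w r n s'' else 0) else 0) = 0 := by
      by_cases h1 : s'' n = 1
      · rw [if_pos h1, if_neg]
        rintro ⟨-, hs⟩
        rw [Function.update_idem, ← h1, Function.update_eq_self] at hs
        exact hss hs
      · rw [if_neg h1]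
    rw [l, rr]
  · rw [Function.update_of_ne hnm, Function.update_of_ne (Ne.symm hnm),
      Function.update_comm (Ne.symm hnm)]
    split_ifs with h0 h1 h2 h3 <;> first
      | rfl
      | tauto
      | exact cross r hr0 hnm s'' h1.1 h0

lemma diag_term1 (r q : ℂ) (hr0 : r ≠ 0) (hr : r ^ 2 = q) (s : Fin N → Fin 2) (m n : Fin N) :
    (if s m = 0 then
        (if (Function.update s m 1) n = 1 ∧ s = Function.update (Function.update s m 1) n 0
          then w r n (Function.update s m 1) * w r m s else 0) else 0) =
    (if n = m then (if s m = 0 then q ^ (Afun m s - Bfun m s) else 0) else 0) := by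
  by_cases hnm : n = m
  · subst hnm
    rw [if_pos rfl]
    by_cases h0 : s n = 0
    · rw [if_pos h0, if_pos h0, if_pos ⟨Function.update_self _ _ _, by
        rw [Function.update_idem, ← h0, Function.update_eq_self]⟩]
      have hw : w r n (Function.update s n 1) = w r n s := by
        rw [w, w, Afun_update_self, Bfun_update_self]
      rw [hw, w_sq r q hr0 hr]
    · rw [if_neg h0, if_neg h0]
  · rw [if_neg hnm]
    by_cases h0 : s m = 0
    · rw [if_pos h0, if_neg]
      rintro ⟨-, hs⟩
      have hsm := congrFun hs m
      rw [Function.update_of_ne (fun h => hnm h.symm) , Function.update_self] at hsm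
      rw [h0] at hsm
      exact absurd hsm (by decide)
    · rw [if_neg h0]

lemma diag_term2 (r q : ℂ) (hr0 : r ≠ 0) (hr : r ^ 2 = q) (s : Fin N → Fin 2) (n m : Fin N) :
    (if s n = 1 then
        (if (Function.update s n 0) m = 0 ∧ s = Function.update (Function.update s n 0) m 1
          then w r m (Function.update s n 0) * w r n s else 0) else 0) =
    (if m = n then (if s n = 1 then q ^ (Afun n s - Bfun n s) else 0) else 0) := by
  by_cases hmn : m = n
  · subst hmn
    rw [if_pos rfl]
    by_cases h1 : s m = 1
    · rw [if_pos h1, if_pos h1, if_pos ⟨Function.update_self _ _ _, by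
        rw [Function.update_idem, ← h1, Function.update_eq_self]⟩]
      have hw : w r m (Function.update s m 0) = w r m s := by
        rw [w, w, Afun_update_self, Bfun_update_self]
      rw [hw, w_sq r q hr0 hr]
    · rw [if_neg h1, if_neg h1]
  · rw [if_neg hmn]
    by_cases h1 : s n = 1
    · rw [if_pos h1, if_neg]
      rintro ⟨-, hs⟩
      have hsn := congrFun hs n
      rw [Function.update_of_ne (fun h => hmn h.symm), Function.update_self] at hsn
      rw [h1] at hsn
      exact absurd hsn (by decide)
    · rw [if_neg h1]

end QGaux

open QGaux in
theorem quantum_group_relations (N : ℕ) (hN : 1 ≤ N) (q r : ℂ)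
    (hq : q ≠ 0) (hq2 : q ^ 2 ≠ 1) (hr : r ^ 2 = q) :
    Sz N * Sp N r - Sp N r * Sz N = Sp N r ∧
    Sz N * Sm N r - Sm N r * Sz N = -(Sm N r) ∧
    Sp N r * Sm N r - Sm N r * Sp N r =
      (q - q⁻¹)⁻¹ • (qPow2Sz N q 1 - qPow2Sz N q (-1)) := by
  classical
  have hr0 : r ≠ 0 := by
    intro h
    apply hq
    rw [← hr, h]
    ring
  have hd : q - q⁻¹ ≠ 0 := by
    intro h
    apply hq2
    have hqq : q = q⁻¹ := sub_eq_zero.mp h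
    have h2 : q * q = q * q⁻¹ := by rw [← hqq]
    rw [mul_inv_cancel₀ hq] at h2
    rw [sq, h2]
  refine ⟨?_, ?_, ?_⟩
  · ext s s'
    rw [Matrix.sub_apply, Sz, Matrix.diagonal_mul, Matrix.mul_diagonal, Sp_apply,
      Finset.mul_sum, Finset.sum_mul, ← Finset.sum_sub_distrib]
    refine Finset.sum_congr rfl fun n _ => ?_
    split_ifs with hc
    · obtain ⟨h1, rfl⟩ := hc
      have ht : (∑ k, spinZ (Function.update s' n 0 k)) = (∑ k, spinZ (s' k)) + 2 := by
        have := tot_update s' n 0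
        rw [tot, tot] at this
        rw [this, h1]
        norm_num [spinZ]
        omega
      rw [ht]
      push_cast
      ring
    · ring
  · ext s s'
    rw [Matrix.neg_apply, Matrix.sub_apply, Sz, Matrix.diagonal_mul, Matrix.mul_diagonal,
      Sm_apply, Finset.mul_sum, Finset.sum_mul, ← Finset.sum_sub_distrib, ← Finset.sum_neg_distrib]
    refine Finset.sum_congr rfl fun n _ => ?_
    split_ifs with hc
    · obtain ⟨h1, rfl⟩ := hc
      have ht : (∑ k, spinZ (Function.update s' n 1 k)) = (∑ k, spinZ (s' k)) - 2 := by
        have := tot_update s' n 1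
        rw [tot, tot] at this
        rw [this, h1]
        norm_num [spinZ]
        omega
      rw [ht]
      push_cast
      ring
    · ring
  · ext s s''
    rw [Matrix.sub_apply, SpSm_apply, SmSp_apply, Matrix.smul_apply, Matrix.sub_apply,
      qPow2Sz, qPow2Sz]
    by_cases hss : s = s''
    · subst hss
      rw [Matrix.diagonal_apply_eq, Matrix.diagonal_apply_eq]
      rw [Finset.sum_congr rfl (fun m _ => Finset.sum_congr rfl
        (fun n _ => diag_term1 r q hr0 hr s m n))]
      rw [Finset.sum_congr rfl (fun n _ => Finset.sum_congr rfl
        (fun m _ => diag_term2 r q hr0 hr s n m))]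
      simp only [Finset.sum_ite_eq', Finset.mem_univ, if_true]
      rw [← Finset.sum_sub_distrib]
      have hterm : ∀ n : Fin N,
          (if s n = 0 then q ^ (Afun n s - Bfun n s) else 0) -
            (if s n = 1 then q ^ (Afun n s - Bfun n s) else 0) =
          (spinZ (s n) : ℂ) * q ^ (Afun n s - Bfun n s) := by
        intro n
        rcases show s n = 0 ∨ s n = 1 from by omega with h | h <;> rw [h] <;>
          norm_num [spinZ]
      rw [Finset.sum_congr rfl (fun n _ => hterm n)]
      have := telescope q hq s
      rw [show (∑ n : Fin N, (spinZ (s n) : ℂ) * q ^ (Afun n s - Bfun n s)) =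
        (q - q⁻¹)⁻¹ * ((q - q⁻¹) * ∑ n : Fin N, (spinZ (s n) : ℂ) * q ^ (Afun n s - Bfun n s)) by
          rw [← mul_assoc, inv_mul_cancel₀ hd, one_mul], this]
      rw [smul_eq_mul, tot, one_mul, neg_one_mul]
    · rw [Matrix.diagonal_apply_ne _ hss, Matrix.diagonal_apply_ne _ hss, sub_self, smul_zero,
        sub_eq_zero]
      rw [Finset.sum_congr rfl (fun m _ => Finset.sum_congr rfl
        (fun n _ => offdiag_term r hr0 s s'' hss m n))]
      exact (Finset.sum_comm).symm
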